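/- Let D = (E, 𝓕) be a delta-matroid and e ∈ E. Then e is a loop of D + e (i.e., e lies in no set of the collection of D + e) if and only if e is a loop of D + E, where D + E denotes loop complementation applied successively at every element of E. -/

import Mathlib

/-- `F` is the collection of feasible sets of a delta-matroid on ground set `E`. -/
def IsDeltaMatroid {α : Type*} [DecidableEq α] (E : Finset α) (F : Finset (Finset α)) : Prop :=
  F.Nonempty ∧ (∀ X ∈ F, X ⊆ E) ∧
    ∀ X ∈ F, ∀ Y ∈ F, ∀ u ∈ symmDiff X Y, ∃ v ∈ symmDiff X Y, symmDiff X {u, v} ∈ F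

/-- Loop complementation at `e`. -/
def loopComp {α : Type*} [DecidableEq α] (e : α) (F : Finset (Finset α)) :
    Finset (Finset α) :=
  symmDiff F ((F.filter (fun X => e ∉ X)).image (fun X => insert e X))

section Aux

variable {α : Type*} [DecidableEq α]

lemma mem_loopComp (f : α) (F : Finset (Finset α)) (Y : Finset α) :
    Y ∈ loopComp f F ↔
      (Y ∈ F ∧ ¬(f ∈ Y ∧ Y.erase f ∈ F)) ∨ ((f ∈ Y ∧ Y.erase f ∈ F) ∧ Y ∉ F) := by
  unfold loopComp
  rw [Finset.mem_symmDiff]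
  have himg : Y ∈ (F.filter (fun X => f ∉ X)).image (fun X => insert f X) ↔
      f ∈ Y ∧ Y.erase f ∈ F := by
    simp only [Finset.mem_image, Finset.mem_filter]
    constructor
    · rintro ⟨X, ⟨hX, hfX⟩, rfl⟩
      exact ⟨Finset.mem_insert_self _ _, by rwa [Finset.erase_insert hfX]⟩
    · rintro ⟨hfY, hY⟩
      exact ⟨Y.erase f, ⟨hY, Finset.notMem_erase _ _⟩, Finset.insert_erase hfY⟩
  rw [himg]

lemma mem_loopComp_of_not_mem {f : α} {H : Finset (Finset α)} {Y : Finset α} (hf : f ∉ Y) :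
    Y ∈ loopComp f H ↔ Y ∈ H := by
  rw [mem_loopComp]; tauto

/-- "e is a loop" transfers across loop complementation at `f ≠ e`. -/
lemma loop_loopComp_ne {e f : α} (hne : f ≠ e) (H : Finset (Finset α)) :
    (∀ X ∈ loopComp f H, e ∉ X) ↔ (∀ X ∈ H, e ∉ X) := by
  constructor
  · intro h X hX heX
    by_cases hf : f ∈ X
    · by_cases hc : X.erase f ∈ H
      · exact h (X.erase f)
          ((mem_loopComp f H _).mpr (Or.inl ⟨hc, fun hp => Finset.notMem_erase f X hp.1⟩))
          (Finset.mem_erase.mpr ⟨fun h' => hne h'.symm, heX⟩)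
      · exact h X ((mem_loopComp f H X).mpr (Or.inl ⟨hX, fun hp => hc hp.2⟩)) heX
    · exact h X ((mem_loopComp f H X).mpr (Or.inl ⟨hX, fun hp => hf hp.1⟩)) heX
  · intro h X hX heX
    rcases (mem_loopComp f H X).mp hX with ⟨hX', _⟩ | ⟨⟨_, hE⟩, _⟩
    · exact h X hX' heX
    · exact h _ hE (Finset.mem_erase.mpr ⟨fun h' => hne h'.symm, heX⟩)

lemma loop_foldr {e : α} {l : List α} (hel : e ∉ l) (H : Finset (Finset α)) :
    (∀ X ∈ l.foldr loopComp H, e ∉ X) ↔ (∀ X ∈ H, e ∉ X) := by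
  induction l with
  | nil => simp
  | cons f t ih =>
    simp only [List.mem_cons, not_or] at hel
    rw [List.foldr_cons, loop_loopComp_ne (fun h => hel.1 h.symm), ih hel.2]

/-- The `e`-symmetry property: membership is insensitive to adding `e`. -/
def Qe (e : α) (H : Finset (Finset α)) : Prop :=
  ∀ X : Finset α, e ∉ X → (X ∈ H ↔ insert e X ∈ H)

lemma loop_iff_Qe (e : α) (F : Finset (Finset α)) :
    (∀ X ∈ loopComp e F, e ∉ X) ↔ Qe e F := by
  constructor
  · intro h X heX
    have h' := h (insert e X)
    rw [mem_loopComp] at h'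
    have h1 : (insert e X).erase e = X := Finset.erase_insert heX
    have h2 : e ∈ insert e X := Finset.mem_insert_self e X
    rw [h1] at h'
    by_cases ha : X ∈ F <;> by_cases hb : insert e X ∈ F <;> simp_all
  · intro h X hX heX
    rw [mem_loopComp] at hX
    have h1 : insert e (X.erase e) = X := Finset.insert_erase heX
    have h2 := h (X.erase e) (Finset.notMem_erase e X)
    rw [h1] at h2
    tauto

lemma Qe_loopComp {e f : α} (hne : f ≠ e) (H : Finset (Finset α)) :
    Qe e (loopComp f H) ↔ Qe e H := by
  have hfe : e ≠ f := fun h => hne h.symm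
  constructor <;> intro h X heX <;> by_cases hf : f ∈ X
  · have hee : e ∉ X.erase f := fun h' => heX (Finset.mem_of_mem_erase h')
    have hfi : f ∈ insert e X := Finset.mem_insert_of_mem hf
    have hre : (insert e X).erase f = insert e (X.erase f) := Finset.erase_insert_of_ne hfe
    have hf1 : f ∉ X.erase f := Finset.notMem_erase f X
    have hf2 : f ∉ insert e (X.erase f) := by
      simp only [Finset.mem_insert, not_or]; exact ⟨hne, hf1⟩
    have h1 := h X heX
    have h2 := h (X.erase f) hee
    rw [mem_loopComp, mem_loopComp, hre] at h1
    rw [mem_loopComp_of_not_mem hf1, mem_loopComp_of_not_mem hf2] at h2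
    tauto
  · have hfi : f ∉ insert e X := by
      simp only [Finset.mem_insert, not_or]; exact ⟨hne, hf⟩
    have h1 := h X heX
    rwa [mem_loopComp_of_not_mem hf, mem_loopComp_of_not_mem hfi] at h1
  · have hee : e ∉ X.erase f := fun h' => heX (Finset.mem_of_mem_erase h')
    have hfi : f ∈ insert e X := Finset.mem_insert_of_mem hf
    have hre : (insert e X).erase f = insert e (X.erase f) := Finset.erase_insert_of_ne hfe
    have h1 := h X heX
    have h2 := h (X.erase f) hee
    rw [mem_loopComp, mem_loopComp, hre]
    tauto
  · have hfi : f ∉ insert e X := by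
      simp only [Finset.mem_insert, not_or]; exact ⟨hne, hf⟩
    rw [mem_loopComp_of_not_mem hf, mem_loopComp_of_not_mem hfi]
    exact h X heX

lemma Qe_foldr {e : α} {l : List α} (hel : e ∉ l) (H : Finset (Finset α)) :
    Qe e (l.foldr loopComp H) ↔ Qe e H := by
  induction l with
  | nil => simp
  | cons f t ih =>
    simp only [List.mem_cons, not_or] at hel
    rw [List.foldr_cons, Qe_loopComp (fun h => hel.1 h.symm), ih hel.2]

end Aux

/-- `e` is a loop of `D + e` (lies in no member of the collection of `D + e`)
if and only if `e` is a loop of `D + E`, where `D + E` is obtained by applying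
loop complementation successively at every element of `E` (here enumerated,
without repetition, by a list `l`). -/
theorem loop_loopComp_single_iff_all {α : Type*} [DecidableEq α] (E : Finset α)
    (F : Finset (Finset α)) (hD : IsDeltaMatroid E F) (e : α) (he : e ∈ E)
    (l : List α) (hnd : l.Nodup) (hl : l.toFinset = E) :
    (∀ X ∈ loopComp e F, e ∉ X) ↔ (∀ X ∈ l.foldr loopComp F, e ∉ X) := by
  have hel : e ∈ l := by rw [← List.mem_toFinset, hl]; exact he
  obtain ⟨l1, l2, rfl⟩ := List.append_of_mem hel
  rw [List.nodup_append] at hnd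
  obtain ⟨-, hnd2, hdisj⟩ := hnd
  have he1 : e ∉ l1 := fun h => hdisj e h e List.mem_cons_self rfl
  have he2 : e ∉ l2 := (List.nodup_cons.mp hnd2).1
  rw [List.foldr_append, List.foldr_cons, loop_foldr he1, loop_iff_Qe, loop_iff_Qe,
    Qe_foldr he2]
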